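/- Let M be an invertible real n×n matrix, A a skew-symmetric n×n matrix, and P' = MᵀM. Define K_A = ∫₀^∞ e^{−tP'}(P'A² − A²P')e^{−tP'} dt. Then the matrix MA² − MK_A is orthogonal, with respect to the Frobenius inner product, to MB for every skew-symmetric matrix B; that is, MA² − MK_A lies in the Frobenius-orthogonal complement of the tangent space M·so(n) of the orbit M·O(n) at M. -/

import Mathlib

open Matrix MeasureTheory

section Aux

lemma sff_integral_exp_neg_mul {c : ℝ} (hc : 0 < c) :
    (∫ t in Set.Ioi (0 : ℝ), Real.exp (-c * t)) = c⁻¹ := by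
  have h := integral_comp_mul_left_Ioi (fun x => Real.exp (-x)) 0 hc
  simp only [mul_zero] at h
  have h2 : (∫ t in Set.Ioi (0 : ℝ), Real.exp (-c * t))
      = ∫ x in Set.Ioi (0 : ℝ), Real.exp (-(c * x)) := by
    congr 1; ext t; rw [neg_mul]
  rw [h2, h, integral_exp_neg_Ioi, neg_zero, Real.exp_zero, smul_eq_mul, mul_one]

lemma sff_lyapunov {n : ℕ} (P C K : Matrix (Fin n) (Fin n) ℝ) (hP : P.PosDef)
    (hK : K = Matrix.of fun i j : Fin n => ∫ t in Set.Ioi (0 : ℝ),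
      (NormedSpace.exp ((-t) • P) * C * NormedSpace.exp ((-t) • P)) i j) :
    P * K + K * P = C := by
  have hHerm : P.IsHermitian := hP.1
  set d : Fin n → ℝ := hHerm.eigenvalues with hd
  have hdpos : ∀ i, 0 < d i := fun i => hP.eigenvalues_pos i
  set U : Matrix (Fin n) (Fin n) ℝ := (hHerm.eigenvectorUnitary : Matrix (Fin n) (Fin n) ℝ)
    with hUdef
  have hU1 : star U * U = 1 := Unitary.coe_star_mul_self _
  have hU2 : U * star U = 1 := Unitary.coe_mul_star_self _
  have hUunit : IsUnit U := ⟨⟨U, star U, hU2, hU1⟩, rfl⟩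
  have hUinv : U⁻¹ = star U := Matrix.inv_eq_right_inv hU2
  have hspec : P = U * Matrix.diagonal d * star U := by
    have h := hHerm.spectral_theorem
    rwa [RCLike.ofReal_real_eq_id, Function.id_comp] at h
  have hcancel : ∀ X : Matrix (Fin n) (Fin n) ℝ, star U * (U * X) = X := by
    intro X; rw [← mul_assoc, hU1, one_mul]
  have hcancel2 : ∀ X : Matrix (Fin n) (Fin n) ℝ, U * (star U * X) = X := by
    intro X; rw [← mul_assoc, hU2, one_mul]
  have hexp : ∀ t : ℝ, NormedSpace.exp ((-t) • P)
      = U * Matrix.diagonal (fun k => Real.exp (-t * d k)) * star U := by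
    intro t
    rw [hspec, ← hUinv]
    have h1 : (-t) • (U * Matrix.diagonal d * U⁻¹)
        = U * ((-t) • Matrix.diagonal d) * U⁻¹ := by
      simp only [smul_mul_assoc, mul_smul_comm]
    rw [h1, Matrix.exp_conj _ _ hUunit, ← Matrix.diagonal_smul, Matrix.exp_diagonal]
    congr 2
    funext k
    rw [Pi.exp_def]
    simp [Real.exp_eq_exp_ℝ]
  set C' : Matrix (Fin n) (Fin n) ℝ := star U * C * U with hC'
  set G : Matrix (Fin n) (Fin n) ℝ := Matrix.of fun k l => C' k l * (d k + d l)⁻¹ with hG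
  have hKeq : K = U * (G * star U) := by
    ext i j
    have hfun : ∀ t : ℝ,
        (NormedSpace.exp ((-t) • P) * C * NormedSpace.exp ((-t) • P)) i j
        = ∑ k, ∑ l, (U i k * C' k l * star U l j) * Real.exp (-(d k + d l) * t) := by
      intro t
      rw [hexp]
      have hw : (U * Matrix.diagonal (fun k => Real.exp (-t * d k)) * star U) * C
            * (U * Matrix.diagonal (fun k => Real.exp (-t * d k)) * star U)
          = U * (Matrix.diagonal (fun k => Real.exp (-t * d k))
              * (C' * (Matrix.diagonal (fun k => Real.exp (-t * d k)) * star U))) := by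
        simp only [hC', mul_assoc, hcancel]
      rw [hw]
      rw [Matrix.mul_apply]
      refine Finset.sum_congr rfl fun k _ => ?_
      rw [Matrix.diagonal_mul, Matrix.mul_apply, Finset.mul_sum, Finset.mul_sum]
      refine Finset.sum_congr rfl fun l _ => ?_
      rw [Matrix.diagonal_mul]
      have he : Real.exp (-(d k + d l) * t) = Real.exp (-t * d k) * Real.exp (-t * d l) := by
        rw [← Real.exp_add]; ring_nf
      rw [he]; ring
    have hint : ∀ k l : Fin n,
        IntegrableOn (fun t : ℝ => (U i k * C' k l * star U l j)
          * Real.exp (-(d k + d l) * t)) (Set.Ioi (0 : ℝ)) := by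
      intro k l
      exact (exp_neg_integrableOn_Ioi 0 (add_pos (hdpos k) (hdpos l))).const_mul _
    have : K i j = ∑ k, ∑ l, (U i k * C' k l * star U l j) * (d k + d l)⁻¹ := by
      rw [hK, Matrix.of_apply]
      calc (∫ t in Set.Ioi (0 : ℝ),
            (NormedSpace.exp ((-t) • P) * C * NormedSpace.exp ((-t) • P)) i j)
          = ∫ t in Set.Ioi (0 : ℝ), ∑ k, ∑ l,
              (U i k * C' k l * star U l j) * Real.exp (-(d k + d l) * t) := by
            exact setIntegral_congr_fun measurableSet_Ioi fun t _ => hfun t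
        _ = ∑ k, ∑ l, ∫ t in Set.Ioi (0 : ℝ),
              (U i k * C' k l * star U l j) * Real.exp (-(d k + d l) * t) := by
            rw [integral_finset_sum _ (fun k _ => integrable_finset_sum _ fun l _ => hint k l)]
            exact Finset.sum_congr rfl fun k _ => integral_finset_sum _ fun l _ => hint k l
        _ = ∑ k, ∑ l, (U i k * C' k l * star U l j) * (d k + d l)⁻¹ := by
            refine Finset.sum_congr rfl fun k _ => Finset.sum_congr rfl fun l _ => ?_
            rw [MeasureTheory.integral_const_mul,
              sff_integral_exp_neg_mul (add_pos (hdpos k) (hdpos l))]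
    rw [this, Matrix.mul_apply]
    refine Finset.sum_congr rfl fun k _ => ?_
    rw [Matrix.mul_apply, Finset.mul_sum]
    refine Finset.sum_congr rfl fun l _ => ?_
    rw [hG, Matrix.of_apply]
    ring
  have hDG : Matrix.diagonal d * G + G * Matrix.diagonal d = C' := by
    ext k l
    simp only [Matrix.add_apply, Matrix.diagonal_mul, Matrix.mul_diagonal, hG, Matrix.of_apply]
    have hne : d k + d l ≠ 0 := (add_pos (hdpos k) (hdpos l)).ne'
    field_simp
  calc P * K + K * P
      = U * ((Matrix.diagonal d * G + G * Matrix.diagonal d) * star U) := by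
        rw [hspec, hKeq]
        simp only [Matrix.add_mul, Matrix.mul_add, mul_assoc, hcancel]
    _ = U * (C' * star U) := by rw [hDG]
    _ = C := by
        rw [hC']
        simp only [mul_assoc, hcancel2]
        rw [hU2, mul_one]

lemma sff_skew {n : ℕ} (P C K : Matrix (Fin n) (Fin n) ℝ) (hPt : Pᵀ = P) (hCt : Cᵀ = -C)
    (hK : K = Matrix.of fun i j : Fin n => ∫ t in Set.Ioi (0 : ℝ),
      (NormedSpace.exp ((-t) • P) * C * NormedSpace.exp ((-t) • P)) i j) :
    Kᵀ = -K := by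
  have hEt : ∀ t : ℝ, (NormedSpace.exp ((-t) • P))ᵀ = NormedSpace.exp ((-t) • P) := by
    intro t
    rw [← Matrix.exp_transpose, Matrix.transpose_smul, hPt]
  ext i j
  rw [hK]
  simp only [Matrix.transpose_apply, Matrix.neg_apply, Matrix.of_apply]
  have hneg : ∀ t : ℝ,
      (NormedSpace.exp ((-t) • P) * C * NormedSpace.exp ((-t) • P)) j i
      = -((NormedSpace.exp ((-t) • P) * C * NormedSpace.exp ((-t) • P)) i j) := by
    intro t
    have h1 : (NormedSpace.exp ((-t) • P) * C * NormedSpace.exp ((-t) • P))ᵀ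
        = -(NormedSpace.exp ((-t) • P) * C * NormedSpace.exp ((-t) • P)) := by
      rw [Matrix.transpose_mul, Matrix.transpose_mul, hEt, hCt, Matrix.neg_mul,
        Matrix.mul_neg, ← mul_assoc]
    calc (NormedSpace.exp ((-t) • P) * C * NormedSpace.exp ((-t) • P)) j i
        = ((NormedSpace.exp ((-t) • P) * C * NormedSpace.exp ((-t) • P))ᵀ) i j := rfl
      _ = -((NormedSpace.exp ((-t) • P) * C * NormedSpace.exp ((-t) • P)) i j) := by
          rw [h1, Matrix.neg_apply]
  calc (∫ t in Set.Ioi (0 : ℝ),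
        (NormedSpace.exp ((-t) • P) * C * NormedSpace.exp ((-t) • P)) j i)
      = ∫ t in Set.Ioi (0 : ℝ),
          -((NormedSpace.exp ((-t) • P) * C * NormedSpace.exp ((-t) • P)) i j) :=
        setIntegral_congr_fun measurableSet_Ioi fun t _ => hneg t
    _ = -(∫ t in Set.Ioi (0 : ℝ),
          (NormedSpace.exp ((-t) • P) * C * NormedSpace.exp ((-t) • P)) i j) :=
        integral_neg _

end Aux

/-- For invertible `M`, skew-symmetric `A`, and `P' = Mᵀ M`, with
`K_A = ∫₀^∞ e^{-tP'}(P'A² - A²P')e^{-tP'} dt`, the matrix `M A² - M K_A` is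
Frobenius-orthogonal to `M B` for every skew-symmetric `B`, i.e. it lies in the
orthogonal complement of the tangent space `M · so(n)` of the orbit `M · O(n)`. -/
theorem second_fundamental_form_normal (n : ℕ) (M A : Matrix (Fin n) (Fin n) ℝ)
    (hM : IsUnit M.det) (hA : Aᵀ = -A) :
    ∀ P' KA : Matrix (Fin n) (Fin n) ℝ, P' = Mᵀ * M →
      KA = (Matrix.of fun i j : Fin n => ∫ t in Set.Ioi (0 : ℝ),
        (NormedSpace.exp ((-t) • P') * (P' * A ^ 2 - A ^ 2 * P') *
          NormedSpace.exp ((-t) • P')) i j) →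
      ∀ B : Matrix (Fin n) (Fin n) ℝ, Bᵀ = -B →
        ((M * A ^ 2 - M * KA) * (M * B)ᵀ).trace = 0 := by
  intro P' KA hP' hKA B hB
  have hPt : P'ᵀ = P' := by
    rw [hP', Matrix.transpose_mul, Matrix.transpose_transpose]
  have hPD : P'.PosDef := by
    refine Matrix.PosDef.of_dotProduct_mulVec_pos ?_ ?_
    · show P'ᴴ = P'
      rw [Matrix.conjTranspose_eq_transpose_of_trivial, hPt]
    · intro x hx
      have hy : M *ᵥ x ≠ 0 := by
        intro h0
        apply hx
        have hxx : M⁻¹ *ᵥ (M *ᵥ x) = x := by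
          rw [Matrix.mulVec_mulVec, Matrix.nonsing_inv_mul M hM, Matrix.one_mulVec]
        rw [← hxx, h0, Matrix.mulVec_zero]
      have hdp : star x ⬝ᵥ (P' *ᵥ x) = star (M *ᵥ x) ⬝ᵥ (M *ᵥ x) := by
        rw [hP', ← Matrix.mulVec_mulVec, Matrix.dotProduct_mulVec, star_trivial,
          Matrix.vecMul_transpose, star_trivial]
      rw [hdp]
      exact Matrix.dotProduct_star_self_pos_iff.mpr hy
  have hA2 : (A ^ 2)ᵀ = A ^ 2 := by
    rw [Matrix.transpose_pow, hA, neg_sq]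
  have hCt : (P' * A ^ 2 - A ^ 2 * P')ᵀ = -(P' * A ^ 2 - A ^ 2 * P') := by
    rw [Matrix.transpose_sub, Matrix.transpose_mul, Matrix.transpose_mul, hA2, hPt, neg_sub]
  have hLyap : P' * KA + KA * P' = P' * A ^ 2 - A ^ 2 * P' :=
    sff_lyapunov P' (P' * A ^ 2 - A ^ 2 * P') KA hPD hKA
  have hKt : KAᵀ = -KA := sff_skew P' (P' * A ^ 2 - A ^ 2 * P') KA hPt hCt hKA
  have h2 : P' * A ^ 2 - P' * KA = A ^ 2 * P' + KA * P' := by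
    refine sub_eq_zero.mp ?_
    have h4 : P' * KA + KA * P' - (P' * A ^ 2 - A ^ 2 * P') = 0 := sub_eq_zero.mpr hLyap
    calc P' * A ^ 2 - P' * KA - (A ^ 2 * P' + KA * P')
        = -(P' * KA + KA * P' - (P' * A ^ 2 - A ^ 2 * P')) := by abel
      _ = 0 := by rw [h4, neg_zero]
  have hStr : (P' * (A ^ 2 - KA))ᵀ = P' * (A ^ 2 - KA) := by
    rw [Matrix.transpose_mul, Matrix.transpose_sub, hA2, hKt, hPt, sub_neg_eq_add,
      Matrix.add_mul, Matrix.mul_sub, h2]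
  have hgoal : ((M * A ^ 2 - M * KA) * (M * B)ᵀ).trace
      = ((P' * (A ^ 2 - KA)) * Bᵀ).trace := by
    rw [← Matrix.mul_sub, Matrix.transpose_mul, hP']
    calc ((M * (A ^ 2 - KA)) * (Bᵀ * Mᵀ)).trace
        = (Mᵀ * (M * (A ^ 2 - KA) * Bᵀ)).trace := by
          rw [← mul_assoc, Matrix.trace_mul_comm]
      _ = ((Mᵀ * M * (A ^ 2 - KA)) * Bᵀ).trace := by
          rw [← mul_assoc, ← mul_assoc]
  rw [hgoal, hB, Matrix.mul_neg, Matrix.trace_neg]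
  have h7 : ((P' * (A ^ 2 - KA)) * B).trace = -((P' * (A ^ 2 - KA)) * B).trace := by
    conv_lhs => rw [← Matrix.trace_transpose, Matrix.transpose_mul, hStr, hB,
      Matrix.neg_mul, Matrix.trace_neg, Matrix.trace_mul_comm]
  have h8 : ((P' * (A ^ 2 - KA)) * B).trace = 0 := by linarith
  rw [h8, neg_zero]
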